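/- Let r and N be positive integers with r dividing N. Let A be a ℂ-subalgebra of the polynomial ring ℂ[z] such that z^N ∈ A and such that the degree of every nonzero element of A is divisible by r. Then A is contained in ℂ[z^r]; that is, for every f ∈ A and every index i not divisible by r, the coefficient of z^i in f is zero. (Core of Lemma 9.2: the algebra A_L of eigenvalue polynomials of a rank-r bispectral operator is a subalgebra of ℂ[z^r].) -/

import Mathlib

open Polynomial

private lemma aux_mul_coeff {r : ℕ} {p q : Polynomial ℂ}
    (hp : ∀ j, ¬ r ∣ j → p.coeff j = 0) (hq : ∀ j, ¬ r ∣ j → q.coeff j = 0) :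
    ∀ j, ¬ r ∣ j → (p * q).coeff j = 0 := by
  intro j hj
  rw [Polynomial.coeff_mul]
  apply Finset.sum_eq_zero
  rintro ⟨a, b⟩ hab
  have hsum : a + b = j := Finset.HasAntidiagonal.mem_antidiagonal.mp hab
  by_cases ha : r ∣ a
  · have hb : ¬ r ∣ b := fun h => hj (hsum ▸ dvd_add ha h)
    rw [hq b hb, mul_zero]
  · rw [hp a ha, zero_mul]

private lemma aux_pow_coeff {r : ℕ} {p : Polynomial ℂ}
    (hp : ∀ j, ¬ r ∣ j → p.coeff j = 0) (n : ℕ) :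
    ∀ j, ¬ r ∣ j → (p ^ n).coeff j = 0 := by
  induction n with
  | zero =>
      intro j hj
      have hj0 : j ≠ 0 := fun h => hj (h ▸ dvd_zero r)
      simp [Polynomial.coeff_one, hj0, Ne.symm hj0]
  | succ n ih =>
      rw [pow_succ]
      exact aux_mul_coeff ih hp

/-- Core of Lemma 9.2: let `r ∣ N` be positive integers and `A` a ℂ-subalgebra of `ℂ[z]`
containing `z^N` such that the degree of every nonzero element of `A` is divisible by `r`.
Then `A ⊆ ℂ[z^r]`: every `f ∈ A` has vanishing coefficient at each index not divisible
by `r`. -/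
theorem subalgebra_subset_invariants (r N : ℕ) (hr : 0 < r) (hN : 0 < N) (hrN : r ∣ N)
    (A : Subalgebra ℂ (Polynomial ℂ))
    (hzN : (Polynomial.X : Polynomial ℂ) ^ N ∈ A)
    (hdeg : ∀ f ∈ A, f ≠ 0 → r ∣ f.natDegree) :
    ∀ f ∈ A, ∀ i : ℕ, ¬ r ∣ i → f.coeff i = 0 := by
  obtain ⟨M, rfl⟩ : ∃ M, N = M + 1 := ⟨N - 1, by omega⟩
  suffices H : ∀ δ : ℕ, ∀ f ∈ A, ∀ i : ℕ, ¬ r ∣ i → f.natDegree ≤ i + δ → f.coeff i = 0 by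
    intro f hf i hi
    exact H f.natDegree f hf i hi (Nat.le_add_left _ _)
  intro δ
  induction δ with
  | zero =>
      intro f hf i hi hle
      by_contra hc
      have h1 : i ≤ f.natDegree := Polynomial.le_natDegree_of_ne_zero hc
      have h2 : i = f.natDegree := by omega
      have hf0 : f ≠ 0 := fun h => hc (by simp [h])
      exact hi (h2 ▸ hdeg f hf hf0)
  | succ δ ih =>
      intro f hf i hi hle
      by_contra hc
      have hile : i ≤ f.natDegree := Polynomial.le_natDegree_of_ne_zero hc
      have hf0 : f ≠ 0 := fun h => hc (by simp [h])
      have hdvd : r ∣ f.natDegree := hdeg f hf hf0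
      have hid : i < f.natDegree :=
        lt_of_le_of_ne hile (fun h => hi (h ▸ hdvd))
      by_cases hcase : f.natDegree ≤ i + δ
      · exact hc (ih f hf i hi hcase)
      set d := f.natDegree with hdδ'
      have hd : d = i + δ + 1 := by omega
      -- bad coefficients above i vanish
      have hhigh : ∀ j, i < j → ¬ r ∣ j → f.coeff j = 0 := by
        intro j hj hj'
        exact ih f hf j hj' (by omega)
      -- decomposition f = u + v
      set v : Polynomial ℂ := ∑ j ∈ Finset.range (i + 1), Polynomial.C (f.coeff j) * Polynomial.X ^ j with hv
      set u : Polynomial ℂ := f - v with hu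
      have hvcoeff : ∀ k, v.coeff k = if k ≤ i then f.coeff k else 0 := by
        intro k
        rw [hv, Polynomial.finset_sum_coeff]
        simp only [Polynomial.coeff_C_mul, Polynomial.coeff_X_pow]
        by_cases hk : k ≤ i
        · rw [Finset.sum_eq_single_of_mem k (Finset.mem_range.mpr (by omega)), if_pos hk]
          · simp
          · intro b _ hb; simp [Ne.symm hb]
        · rw [if_neg hk, Finset.sum_eq_zero]
          intro j hj
          rw [Finset.mem_range] at hj
          simp [show k ≠ j by omega]
      have hucoeff_low : ∀ k, k ≤ i → u.coeff k = 0 := by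
        intro k hk
        rw [hu, Polynomial.coeff_sub, hvcoeff k, if_pos hk, sub_self]
      have hucoeff_high : ∀ k, i < k → u.coeff k = f.coeff k := by
        intro k hk
        rw [hu, Polynomial.coeff_sub, hvcoeff k, if_neg (by omega), sub_zero]
      have hur : ∀ j, ¬ r ∣ j → u.coeff j = 0 := by
        intro j hj
        by_cases hji : j ≤ i
        · exact hucoeff_low j hji
        · rw [hucoeff_high j (by omega)]
          exact hhigh j (by omega) hj
      have hudeg : u.natDegree = d := by
        apply le_antisymm
        · rw [Polynomial.natDegree_le_iff_coeff_eq_zero]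
          intro m hm
          rw [hucoeff_high m (by omega)]
          exact Polynomial.coeff_eq_zero_of_natDegree_lt hm
        · apply Polynomial.le_natDegree_of_ne_zero
          rw [hucoeff_high d hid]
          exact fun h => hf0 (Polynomial.leadingCoeff_eq_zero.mp h)
      have hvdeg : v.natDegree = i := by
        apply le_antisymm
        · rw [Polynomial.natDegree_le_iff_coeff_eq_zero]
          intro m hm
          rw [hvcoeff m, if_neg (by omega)]
        · apply Polynomial.le_natDegree_of_ne_zero
          rw [hvcoeff i, if_pos le_rfl]
          exact hc
      have hulead : u.leadingCoeff = f.coeff d := by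
        rw [Polynomial.leadingCoeff, hudeg, hucoeff_high d hid]
      have hvlead : v.leadingCoeff = f.coeff i := by
        rw [Polynomial.leadingCoeff, hvdeg, hvcoeff i, if_pos le_rfl]
      have hcne : f.coeff d ≠ 0 :=
        fun h => hf0 (Polynomial.leadingCoeff_eq_zero.mp h)
      -- the key coefficient computation
      set m : ℕ := M * d + i with hm
      have hmbad : ¬ r ∣ m := by
        intro hdm
        have : r ∣ M * d := Dvd.dvd.mul_left hdvd M
        exact hi ((Nat.dvd_add_right this).mp hdm)
      have hfuv : f = u + v := by rw [hu]; ring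
      have hkey : (f ^ (M + 1)).coeff m = f.coeff d ^ M * f.coeff i * (M + 1 : ℂ) := by
        rw [hfuv, add_pow, Polynomial.finset_sum_coeff]
        rw [Finset.sum_range_succ, Finset.sum_range_succ]
        have hzero : ∀ k ∈ Finset.range M,
            (u ^ k * v ^ (M + 1 - k) * (Nat.choose (M + 1) k : Polynomial ℂ)).coeff m = 0 := by
          intro k hk
          rw [Finset.mem_range] at hk
          apply Polynomial.coeff_eq_zero_of_natDegree_lt
          have h1 : (u ^ k * v ^ (M + 1 - k) * (Nat.choose (M + 1) k : Polynomial ℂ)).natDegree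
              ≤ k * d + (M + 1 - k) * i := by
            apply le_trans (Polynomial.natDegree_mul_le)
            have : ((Nat.choose (M + 1) k : ℕ) : Polynomial ℂ).natDegree = 0 :=
              Polynomial.natDegree_natCast _
            rw [this, add_zero]
            apply le_trans (Polynomial.natDegree_mul_le)
            apply add_le_add
            · exact le_trans (Polynomial.natDegree_pow_le) (by rw [hudeg])
            · exact le_trans (Polynomial.natDegree_pow_le) (by rw [hvdeg])
          apply lt_of_le_of_lt h1
          have ha : M + 1 - k = (M - k) + 1 := by omega
          rw [ha, hm]
          have : (M - k + 1) * i = (M - k) * i + i := by ring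
          rw [this]
          have h2 : (M - k) * i < (M - k) * d := by
            have hMk : 0 < M - k := by omega
            exact Nat.mul_lt_mul_of_pos_left hid hMk
          have h3 : k * d + (M - k) * d = M * d := by
            have : k + (M - k) = M := by omega
            calc k * d + (M - k) * d = (k + (M - k)) * d := by ring
            _ = M * d := by rw [this]
          omega
        rw [Finset.sum_eq_zero hzero]
        -- k = M term and k = M+1 term
        have hM1 : M + 1 - M = 1 := by omega
        have htop : (u ^ (M + 1) * v ^ (M + 1 - (M + 1)) *
            (Nat.choose (M + 1) (M + 1) : Polynomial ℂ)).coeff m = 0 := by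
          simp only [Nat.sub_self, pow_zero, mul_one, Nat.choose_self, Nat.cast_one]
          exact aux_pow_coeff hur (M + 1) m hmbad
        rw [htop, hM1]
        have hchoose : (Nat.choose (M + 1) M : Polynomial ℂ) = Polynomial.C ((M + 1 : ℕ) : ℂ) := by
          rw [Nat.choose_succ_self_right]
          simp
        rw [hchoose, pow_one, Polynomial.coeff_mul_C]
        have hmd : m = (u ^ M).natDegree + v.natDegree := by
          rw [Polynomial.natDegree_pow, hudeg, hvdeg, hm]
        rw [hmd, Polynomial.coeff_mul_degree_add_degree, Polynomial.leadingCoeff_pow,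
          hulead, hvlead]
        push_cast
        rw [← hfuv]
        ring
      -- the element h of A
      set h : Polynomial ℂ :=
        f ^ (M + 1) - Polynomial.C (f.coeff d ^ (M + 1)) * Polynomial.X ^ ((M + 1) * d) with hh
      have hhA : h ∈ A := by
        apply Subalgebra.sub_mem _ (Subalgebra.pow_mem _ hf _)
        have hx : (Polynomial.X : Polynomial ℂ) ^ ((M + 1) * d) = ((Polynomial.X) ^ (M + 1)) ^ d := by
          rw [← pow_mul]
        rw [hx, ← Polynomial.smul_eq_C_mul]
        exact Subalgebra.smul_mem _ (Subalgebra.pow_mem _ hzN _) _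
      have hmlt : m < (M + 1) * d := by
        have : (M + 1) * d = M * d + d := by ring
        omega
      have hhcm : h.coeff m = f.coeff d ^ M * f.coeff i * (M + 1 : ℂ) := by
        rw [hh, Polynomial.coeff_sub, hkey, Polynomial.coeff_C_mul, Polynomial.coeff_X_pow,
          if_neg (by omega), mul_zero, sub_zero]
      have hhcm_ne : h.coeff m ≠ 0 := by
        rw [hhcm]
        apply mul_ne_zero (mul_ne_zero (pow_ne_zero _ hcne) hc)
        exact Nat.cast_add_one_ne_zero M
      have hhne : h ≠ 0 := fun h0 => hhcm_ne (by simp [h0])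
      -- natDegree h < (M+1)*d
      have hhtop : h.coeff ((M + 1) * d) = 0 := by
        rw [hh, Polynomial.coeff_sub, Polynomial.coeff_C_mul, Polynomial.coeff_X_pow, if_pos rfl,
          mul_one]
        have : (f ^ (M + 1)).coeff ((M + 1) * d) = f.leadingCoeff ^ (M + 1) := by
          rw [show (M + 1) * d = (f ^ (M + 1)).natDegree by rw [Polynomial.natDegree_pow]]
          rw [← Polynomial.leadingCoeff, Polynomial.leadingCoeff_pow]
        rw [this, Polynomial.leadingCoeff, sub_self]
      have hhle : h.natDegree ≤ (M + 1) * d := by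
        apply le_trans (Polynomial.natDegree_sub_le _ _)
        apply max_le
        · rw [Polynomial.natDegree_pow]
        · apply le_trans (Polynomial.natDegree_mul_le)
          simp [Polynomial.natDegree_X_pow]
      have hhlt : h.natDegree < (M + 1) * d := by
        rcases lt_or_eq_of_le hhle with hlt | heq
        · exact hlt
        · exfalso
          apply hhne
          apply Polynomial.leadingCoeff_eq_zero.mp
          rw [Polynomial.leadingCoeff, heq, hhtop]
      have hfinal : h.natDegree ≤ m + δ := by
        have : (M + 1) * d = M * d + d := by ring
        omega
      exact hhcm_ne (ih h hhA m hmbad hfinal)
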